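/- Let k ≥ 6 be an integer and let s, i be integers with 2 ≤ s ≤ k−3 and 1 ≤ i ≤ ⌊(k−1)/2⌋. Then 2·Σ_{h=1}^{s} cos(hπ/k) + 2·Σ_{h=1}^{s} cos((2i+1)hπ/k) > 0; that is, λ_1^{(s)} + λ_{2i+1}^{(s)} > 0 for the eigenvalues of the circulant graph G(ℤ_{2k}, {1,…,s, 2k−s,…,2k−1}). -/

import Mathlib

set_option maxHeartbeats 1000000
open Real

lemma sin_five_mul' (x : ℝ) : sin (5*x) = 5*sin x - 20*(sin x)^3 + 16*(sin x)^5 := by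
  have h5 : (5:ℝ)*x = 2*x + 3*x := by ring
  rw [h5, sin_add, sin_two_mul, cos_two_mul, sin_three_mul, cos_three_mul]
  have hc : cos x ^ 2 = 1 - sin x ^ 2 := cos_sq' x
  linear_combination (8*sin x*(cos x^2 + 1 - sin x^2) - 8*sin x^3) * hc

lemma sin_mono {a b : ℝ} (ha : 0 ≤ a) (hab : a ≤ b) (hb : b ≤ π/2) : sin a ≤ sin b :=
  Real.strictMonoOn_sin.monotoneOn ⟨by linarith [pi_pos], by linarith [pi_pos]⟩
    ⟨by linarith [pi_pos], hb⟩ hab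

lemma sin_taylor {x : ℝ} (h0 : 0 ≤ x) (h1 : x ≤ 1) :
    x - x^3/6 - x^4*(5/96) ≤ sin x ∧ sin x ≤ x - x^3/6 + x^4*(5/96) := by
  have hb := Real.sin_bound (x := x) (by rwa [abs_of_nonneg h0])
  have hx : |x| = x := abs_of_nonneg h0
  rw [hx] at hb
  have h2 := abs_le.1 hb
  have h54 : x^5 ≤ x^4 := pow_le_pow_of_le_one h0 h1 (by norm_num)
  have h4n : 0 ≤ x^4 := pow_nonneg h0 4
  exact ⟨by linarith [h2.1], by linarith [h2.2]⟩

lemma branch1 {t B P : ℝ} (ht0 : 0 < t) (h21 : t ≤ 0.21) (hB : 0.578 ≤ B) (hB0 : 0 < B)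
    (hPA : t*(3-20*t^2+16*t^4) ≤ P) : t < B * P := by
  have htF : (0:ℝ) ≤ t*(3-20*t^2+16*t^4) := by nlinarith [sq_nonneg t, sq_nonneg (t*t)]
  have hc1 : 0.578 * (t*(3-20*t^2+16*t^4)) ≤ B * P := mul_le_mul hB hPA htF hB0.le
  nlinarith [sq_nonneg t, mul_pos ht0 ht0, sq_nonneg (t*t)]

lemma branch2 {t B P : ℝ} (h21 : 0.21 ≤ t) (htu : t ≤ 0.2591) (hB : 3*t-4*t^3 ≤ B) (hB0 : 0 < B)
    (hPA : t*(3-20*t^2+16*t^4) ≤ P) : t < B * P := by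
  have ht0 : 0 < t := by linarith
  have htF : (0:ℝ) ≤ t*(3-20*t^2+16*t^4) := by nlinarith [sq_nonneg t, sq_nonneg (t*t)]
  have hc2 : (3*t-4*t^3) * (t*(3-20*t^2+16*t^4)) ≤ B * P := mul_le_mul hB hPA htF hB0.le
  have hpoly : 1 < t*(3-4*t^2)*(3-20*t^2+16*t^4) := by
    nlinarith [mul_nonneg (sub_nonneg.2 h21) (sub_nonneg.2 htu), sq_nonneg (t-0.23),
      mul_nonneg (mul_nonneg (sub_nonneg.2 h21) (sub_nonneg.2 htu)) (sq_nonneg t),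
      mul_nonneg (mul_nonneg (sub_nonneg.2 h21) (sub_nonneg.2 htu)) (sq_nonneg (t-0.23)),
      mul_nonneg (mul_nonneg (sub_nonneg.2 h21) (sub_nonneg.2 htu)) (mul_nonneg (sub_nonneg.2 h21) (sub_nonneg.2 htu)),
      sq_nonneg (t*t - 0.055)]
  have h4 := mul_lt_mul_of_pos_left hpoly ht0
  nlinarith [hc2, h4]

lemma branch3 {t B P : ℝ} (ht0 : 0 < t) (h20 : t ≤ 0.2095) (hB : 3*t-4*t^3 ≤ B) (hB0 : 0 < B)
    (hP : 0.866-2*t ≤ P) : t < B * P := by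
  have hc : (3*t-4*t^3) * (0.866-2*t) ≤ B * P :=
    mul_le_mul hB hP (by nlinarith) hB0.le
  nlinarith [hc, sq_nonneg t, mul_pos ht0 ht0]

lemma branch4 {α x y t B P : ℝ} (hα : 0 < α) (htα : t ≤ α) (hx6 : x ≤ 0.6283186) (hx0 : 0 ≤ x)
    (hxy : x*y = π*α) (hB : 0.92*x ≤ B) (hB0 : 0 < B) (hP : 0.87*y-2*α ≤ P)
    (hPos : 0 ≤ 0.87*y-2*α) : t < B * P := by
  have hπl : 3.141592 < π := pi_gt_d6
  have hc : (0.92*x) * (0.87*y-2*α) ≤ B * P := mul_le_mul hB hP hPos hB0.le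
  nlinarith [hc, mul_le_mul_of_nonneg_right hx6 hα.le,
    mul_le_mul_of_nonneg_right (le_of_lt hπl) hα.le]

lemma main (α : ℝ) (m j : ℕ) (hα : 0 < α) (hα12 : α ≤ π/12)
    (hm5 : 5 ≤ m) (hmk : (m:ℝ)*α ≤ π/2) (hj3 : 3 ≤ j) (hjk : (j:ℝ)*α ≤ π/2) :
    2*(sin α)*(sin ((j:ℝ)*α)) < sin ((m:ℝ)*α) * sin ((j:ℝ)*α) + sin ((m:ℝ)*((j:ℝ)*α)) * sin α := by
  have hπl : 3.141592 < π := pi_gt_d6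
  have hπu : π < 3.141593 := pi_lt_d6
  have hα1 : α ≤ 0.2618 := by linarith
  set t := sin α with ht
  set B := sin ((j:ℝ)*α) with hBdef
  have hm5' : (5:ℝ) ≤ (m:ℝ) := by exact_mod_cast hm5
  have hj3' : (3:ℝ) ≤ (j:ℝ) := by exact_mod_cast hj3
  have hj0 : (0:ℝ) < (j:ℝ) := by linarith
  have ht0 : 0 < t := sin_pos_of_pos_of_lt_pi hα (by linarith)
  have htα : t < α := sin_lt hα
  have htu : t ≤ 0.2591 := by
    have h1 := (sin_taylor (x := α) hα.le (by linarith)).2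
    nlinarith [mul_nonneg (sub_nonneg.2 hα1) (sq_nonneg α),
      mul_nonneg (sub_nonneg.2 hα1) (mul_nonneg (mul_nonneg hα.le hα.le) hα.le),
      mul_nonneg (sub_nonneg.2 hα1) hα.le]
  have hB0 : 0 < B := sin_pos_of_pos_of_lt_pi (by positivity) (by linarith)
  have hP5 : sin (5*α) ≤ sin ((m:ℝ)*α) :=
    sin_mono (by positivity) (by nlinarith) hmk
  have h5 : sin (5*α) = 5*t - 20*t^3 + 16*t^5 := sin_five_mul' α
  have h3 : sin (3*α) = 3*t - 4*t^3 := sin_three_mul α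
  have hB3 : sin (3*α) ≤ B := sin_mono (by linarith) (by nlinarith) hjk
  have hB3' : 3*t - 4*t^3 ≤ B := by linarith [h3 ▸ hB3]
  have hPA : t*(3-20*t^2+16*t^4) ≤ sin ((m:ℝ)*α) - 2*t := by nlinarith [hP5, h5]
  have hF0 : (0:ℝ) < 3-20*t^2+16*t^4 := by nlinarith
  by_cases hQ : 0 ≤ sin ((m:ℝ)*((j:ℝ)*α))
  · have h1 : 0 < (sin ((m:ℝ)*α) - 2*t) * B :=
      mul_pos (lt_of_lt_of_le (mul_pos ht0 hF0) hPA) hB0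
    have h2 : 0 ≤ sin ((m:ℝ)*((j:ℝ)*α)) * t := mul_nonneg hQ ht0.le
    linarith [h1, h2]
  · push_neg at hQ
    have hQ1 : -1 ≤ sin ((m:ℝ)*((j:ℝ)*α)) := neg_one_le_sin _
    have hπmj : π < (m:ℝ)*((j:ℝ)*α) := by
      by_contra h
      push_neg at h
      exact absurd (sin_nonneg_of_nonneg_of_le_pi (by positivity) h) (not_le.2 hQ)
    suffices hkey : t < B * (sin ((m:ℝ)*α) - 2*t) by
      nlinarith [mul_le_mul_of_nonneg_right hQ1 ht0.le]
    by_cases hx : π/5 ≤ (j:ℝ)*α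
    · have hBp : sin (π/5) ≤ B := sin_mono (by positivity) hx hjk
      have hp5 : (0.578:ℝ) ≤ sin (π/5) := by
        have hpd : (0:ℝ) ≤ π/5 := by positivity
        have h1 := (sin_taylor (x := π/5) hpd (by linarith)).1
        nlinarith [pow_le_pow_left₀ hpd (by linarith : π/5 ≤ 0.6283186) 3,
          pow_le_pow_left₀ hpd (by linarith : π/5 ≤ 0.6283186) 4,
          (by linarith : (0.6283184:ℝ) ≤ π/5)]
      rcases le_or_gt t 0.21 with h21 | h21
      · exact branch1 ht0 h21 (le_trans hp5 hBp) hB0 hPA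
      · exact branch2 h21.le htu hB3' hB0 hPA
    · push_neg at hx
      have hx6 : (j:ℝ)*α ≤ 0.6283186 := by linarith
      have hjα0 : (0:ℝ) ≤ (j:ℝ)*α := by positivity
      have hBx : 0.92 * ((j:ℝ)*α) ≤ B := by
        have h1 := (sin_taylor (x := (j:ℝ)*α) hjα0 (by linarith)).1
        nlinarith [mul_nonneg (sub_nonneg.2 hx6) hjα0,
          mul_nonneg (mul_nonneg (sub_nonneg.2 hx6) hjα0) hjα0,
          mul_nonneg (mul_nonneg (mul_nonneg (sub_nonneg.2 hx6) hjα0) hjα0) hjα0]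
      have hmj : π/(j:ℝ) < (m:ℝ)*α := by
        rw [div_lt_iff₀ hj0]; nlinarith [hπmj]
      have hPj : sin (π/(j:ℝ)) ≤ sin ((m:ℝ)*α) :=
        sin_mono (by positivity) hmj.le hmk
      have h5y : 5*α < π/(j:ℝ) := by
        rw [lt_div_iff₀ hj0]; nlinarith [hx]
      rcases eq_or_lt_of_le hj3 with hj3e | hj4
      · -- j = 3
        have hj3r : ((j:ℝ)) = 3 := by rw [← hj3e]; norm_num
        have hs3 : (1.732:ℝ) ≤ Real.sqrt 3 := by
          nlinarith [Real.sq_sqrt (by norm_num : (0:ℝ) ≤ 3), Real.sqrt_nonneg 3]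
        have hP : (0.866:ℝ) ≤ sin ((m:ℝ)*α) := by
          have hval : sin (π/(j:ℝ)) = Real.sqrt 3 / 2 := by rw [hj3r]; exact Real.sin_pi_div_three
          rw [hval] at hPj; linarith
        have hα15 : α < 0.2095 := by
          rw [hj3r] at hx; linarith
        exact branch3 ht0 (by linarith) hB3' hB0 (by linarith)
      · -- 4 ≤ j
        have hj4' : (4:ℝ) ≤ (j:ℝ) := by exact_mod_cast hj4
        have hy0 : (0:ℝ) < π/(j:ℝ) := by positivity
        have hy1 : π/(j:ℝ) ≤ 0.7854 := by
          have h2 : π/(j:ℝ) ≤ π/4 := by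
            apply div_le_div_of_nonneg_left pi_pos.le (by norm_num) hj4'
          linarith
        have hsy : 0.87 * (π/(j:ℝ)) ≤ sin (π/(j:ℝ)) := by
          have h1 := (sin_taylor (x := π/(j:ℝ)) hy0.le (by linarith)).1
          nlinarith [mul_nonneg (sub_nonneg.2 hy1) hy0.le,
            mul_nonneg (mul_nonneg (sub_nonneg.2 hy1) hy0.le) hy0.le,
            mul_nonneg (mul_nonneg (mul_nonneg (sub_nonneg.2 hy1) hy0.le) hy0.le) hy0.le]
        have hxy : ((j:ℝ)*α)*(π/(j:ℝ)) = π*α := by field_simp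
        exact branch4 hα htα.le hx6 hjα0 hxy hBx hB0 (by linarith) (by linarith)

lemma kernel (β : ℝ) (hβ : Real.sin β ≠ 0) (s : ℕ) :
    2 * ∑ h ∈ Finset.Icc (1:ℕ) s, Real.cos (2 * h * β)
      = Real.sin ((2*s+1) * β) / Real.sin β - 1 := by
  induction s with
  | zero => simp [div_self hβ]
  | succ n ih =>
      rw [Finset.sum_Icc_succ_top (by omega), mul_add, ih]
      have key : Real.sin ((2*(n+1:ℕ)+1) * β) - Real.sin ((2*(n:ℕ)+1) * β)
          = 2 * Real.cos (2*(n+1:ℕ)*β) * Real.sin β := by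
        rw [Real.sin_sub_sin]
        push_cast
        ring_nf
      field_simp
      push_cast at key ⊢
      ring_nf at key ⊢
      linarith [key]

theorem stmt16 (k s i : ℕ) (hk : 6 ≤ k) (hs2 : 2 ≤ s) (hsk : s ≤ k - 3)
    (hi1 : 1 ≤ i) (hi : i ≤ (k - 1) / 2) :
    0 < 2 * ∑ h ∈ Finset.Icc (1 : ℕ) s, Real.cos ((h : ℝ) * π / k) +
        2 * ∑ h ∈ Finset.Icc (1 : ℕ) s, Real.cos ((2 * i + 1 : ℝ) * h * π / k) := by
  have hπ : 0 < π := pi_pos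
  have hk0 : (0:ℝ) < (k:ℝ) := by positivity
  set α : ℝ := π/(2*(k:ℝ)) with hαdef
  have hα0 : 0 < α := by positivity
  have hk2 : 2*(k:ℝ)*α = π := by rw [hαdef]; field_simp
  have hα12 : α ≤ π/12 := by
    rw [hαdef]
    apply div_le_div_of_nonneg_left hπ.le (by norm_num)
    have : (6:ℝ) ≤ (k:ℝ) := by exact_mod_cast hk
    linarith
  set jn := 2*i+1 with hjndef
  have hj3 : 3 ≤ jn := by omega
  have hjk : jn ≤ k := by omega
  have hjkr : (jn:ℝ) ≤ (k:ℝ) := by exact_mod_cast hjk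
  have hjα : (jn:ℝ)*α ≤ π/2 := by nlinarith [mul_nonneg (sub_nonneg.2 hjkr) hα0.le]
  have hA : 0 < sin α := sin_pos_of_pos_of_lt_pi hα0 (by nlinarith)
  have hB : 0 < sin ((jn:ℝ)*α) := sin_pos_of_pos_of_lt_pi (by positivity) (by nlinarith)
  have S1 : 2 * ∑ h ∈ Finset.Icc (1 : ℕ) s, Real.cos ((h : ℝ) * π / k)
      = sin ((2*(s:ℝ)+1)*α) / sin α - 1 := by
    rw [show (∑ h ∈ Finset.Icc (1 : ℕ) s, Real.cos ((h : ℝ) * π / k))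
        = ∑ h ∈ Finset.Icc (1 : ℕ) s, Real.cos (2*(h:ℝ)*α) from
      Finset.sum_congr rfl (fun h _ => by rw [hαdef]; congr 1; field_simp)]
    exact_mod_cast kernel α hA.ne' s
  have S2 : 2 * ∑ h ∈ Finset.Icc (1 : ℕ) s, Real.cos ((2 * i + 1 : ℝ) * h * π / k)
      = sin ((2*(s:ℝ)+1)*((jn:ℝ)*α)) / sin ((jn:ℝ)*α) - 1 := by
    rw [show (∑ h ∈ Finset.Icc (1 : ℕ) s, Real.cos ((2 * i + 1 : ℝ) * h * π / k))
        = ∑ h ∈ Finset.Icc (1 : ℕ) s, Real.cos (2*(h:ℝ)*((jn:ℝ)*α)) from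
      Finset.sum_congr rfl (fun h _ => by
        rw [hαdef, hjndef]; congr 1; push_cast; field_simp)]
    exact_mod_cast kernel ((jn:ℝ)*α) hB.ne' s
  rw [S1, S2]
  -- choose m
  obtain ⟨m, hm5, hmk, hPeq, hQeq⟩ :
      ∃ m : ℕ, 5 ≤ m ∧ (m:ℝ)*α ≤ π/2 ∧
        sin ((2*(s:ℝ)+1)*α) = sin ((m:ℝ)*α) ∧
        sin ((2*(s:ℝ)+1)*((jn:ℝ)*α)) = sin ((m:ℝ)*((jn:ℝ)*α)) := by
    by_cases hc : 2*s+1 ≤ k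
    · refine ⟨2*s+1, by omega, ?_, by push_cast; ring_nf, by push_cast; ring_nf⟩
      have hcr : ((2*s+1:ℕ):ℝ) ≤ (k:ℝ) := by exact_mod_cast hc
      push_cast at hcr ⊢
      nlinarith [mul_nonneg (sub_nonneg.2 hcr) hα0.le]
    · refine ⟨2*k-(2*s+1), by omega, ?_, ?_, ?_⟩
      · have hcr : ((2*k-(2*s+1):ℕ):ℝ) = 2*(k:ℝ)-(2*(s:ℝ)+1) := by
          push_cast [Nat.cast_sub (by omega : 2*s+1 ≤ 2*k)]; ring
        rw [hcr]
        have hsk' : (k:ℝ) < 2*(s:ℝ)+1 := by exact_mod_cast (by omega : k < 2*s+1)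
        nlinarith
      · have hcr : ((2*k-(2*s+1):ℕ):ℝ) = 2*(k:ℝ)-(2*(s:ℝ)+1) := by
          push_cast [Nat.cast_sub (by omega : 2*s+1 ≤ 2*k)]; ring
        rw [hcr, show (2*(k:ℝ)-(2*(s:ℝ)+1))*α = π - (2*(s:ℝ)+1)*α by rw [← hk2]; ring,
          sin_pi_sub]
      · have hcr : ((2*k-(2*s+1):ℕ):ℝ) = 2*(k:ℝ)-(2*(s:ℝ)+1) := by
          push_cast [Nat.cast_sub (by omega : 2*s+1 ≤ 2*k)]; ring
        rw [hcr]
        have harg : (2*(k:ℝ)-(2*(s:ℝ)+1))*((jn:ℝ)*α)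
            = (π - (2*(s:ℝ)+1)*((jn:ℝ)*α)) + (i:ℤ)*(2*π) := by
          rw [hjndef]; push_cast
          nlinarith [hk2]
        rw [harg, Real.sin_add_int_mul_two_pi, sin_pi_sub]
  rw [hPeq, hQeq]
  have hmain := main α m jn hα0 hα12 hm5 hmk hj3 hjα
  have hgoal : sin ((m:ℝ)*α)/sin α - 1 + (sin ((m:ℝ)*((jn:ℝ)*α))/sin ((jn:ℝ)*α) - 1)
      = (sin ((m:ℝ)*α) * sin ((jn:ℝ)*α) + sin ((m:ℝ)*((jn:ℝ)*α)) * sin α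
          - 2*(sin α)*(sin ((jn:ℝ)*α)))/(sin α * sin ((jn:ℝ)*α)) := by
    rw [div_sub_one hA.ne', div_sub_one hB.ne', div_add_div _ _ hA.ne' hB.ne']; ring
  rw [hgoal]
  apply div_pos (by linarith) (mul_pos hA hB)
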